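/- (Single-step propagation of weight moments.) Let s ∈ ℍ, λ ∈ ℂ with Im λ ≥ 0, p ∈ (0,1), ν a Borel probability measure on ℝ with ∫ |q|^{2(1+p)} dν(q) < ∞, and ρ a Borel probability measure on ℍ with ∫_ℍ w_s(z)^{1+p} dρ(z) < ∞. Then ∫_{ℍ×ℝ} w_s( −1/(z + λ − q + 1) )^{1+p} dρ(z) dν(q) < ∞. (Note that for z ∈ ℍ, q ∈ ℝ and Im λ ≥ 0 one has −1/(z + λ − q + 1) ∈ ℍ.) -/

import Mathlib

open MeasureTheory
open scoped ENNReal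

noncomputable section

/-- The weight based at `s`: `w_s(z) = |z−s|²/(Im z · Im s)`. -/
def wt (s z : ℂ) : ℝ := ‖z - s‖ ^ 2 / (z.im * s.im)

set_option maxHeartbeats 1000000

lemma wt_invert (s : ℂ) (hs : 0 < s.im) (u : ℂ) (hu : 0 < u.im) :
    wt s (-1/u) = ‖1 + s*u‖ ^ 2 / (u.im * s.im) := by
  have hu0 : u ≠ 0 := by
    intro h; rw [h] at hu; simp at hu
  have hab0 : ‖u‖ ≠ 0 := by simpa using hu0
  have h1 : (-1/u) - s = -((1 + s*u)/u) := by field_simp; ring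
  have hab : ‖(-1/u) - s‖ = ‖1+s*u‖ / ‖u‖ := by
    rw [h1, norm_neg, norm_div]
  have him : (-1/u).im = u.im / Complex.normSq u := by
    rw [neg_div, Complex.neg_im, one_div, Complex.inv_im]
    ring
  have hns : Complex.normSq u ≠ 0 := by simpa using hu0
  have hsq : ‖u‖ ^ 2 = Complex.normSq u := Complex.sq_norm u
  unfold wt
  rw [hab, him, div_pow, hsq]
  field_simp

set_option maxHeartbeats 1000000 in
-- pure real key inequality
lemma real_key (a y m t q c σ N U A : ℝ)
    (ha : 0 < a) (hy : 0 < y) (hm : 0 ≤ m) (ht : 0 ≤ t) (hc : 1 ≤ c)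
    (hσ : 0 ≤ σ) (hA : 0 ≤ A) (hU : 0 ≤ U) (hN : 0 ≤ N)
    (hA2 : A^2 = t*(y*a)) (hya : (y-a)^2 ≤ A^2)
    (hUb : U ≤ A + (c + |q|)) (hNb : N ≤ 1 + σ * U) :
    N^2 * a^2 ≤ (2 + 6*σ^2*a^2 + 12*σ^2*c^2) * (((t+2)*(1+q^2))*((y+m)*a)) := by
  have hq0 : (0:ℝ) ≤ q^2 := sq_nonneg q
  have h_a_ty : a ≤ (t+2)*y := by nlinarith
  have hy2 : y ≤ (1+q^2)*(y+m) := by nlinarith [mul_nonneg hq0 (by linarith : (0:ℝ) ≤ y+m)]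
  have hU2 : U^2 ≤ 3*(A^2 + c^2 + q^2) := by
    have h2 : |q|^2 = q^2 := sq_abs q
    nlinarith [sq_nonneg (A - c), sq_nonneg (A - |q|), sq_nonneg (c - |q|), abs_nonneg q]
  have hN2 : N^2 ≤ 2 + 2*σ^2*U^2 := by
    nlinarith [sq_nonneg (1 - σ*U), mul_nonneg hσ hU]
  have h_a_P : a ≤ (t+2)*(1+q^2)*(y+m) := by
    have := mul_le_mul_of_nonneg_left hy2 (by linarith : (0:ℝ) ≤ t+2)
    nlinarith [this]
  have e1 : 2*a^2 ≤ 2*(((t+2)*(1+q^2))*((y+m)*a)) := by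
    have := mul_le_mul_of_nonneg_right h_a_P ha.le
    nlinarith [this]
  have e2 : 6*σ^2*(t*(y*a))*a^2 ≤ 6*σ^2*a^2*(((t+2)*(1+q^2))*((y+m)*a)) := by
    have h6 : t*y ≤ (t+2)*((1+q^2)*(y+m)) :=
      mul_le_mul (by linarith) hy2 hy.le (by linarith)
    have := mul_le_mul_of_nonneg_left h6 (by positivity : (0:ℝ) ≤ 6*σ^2*a^2*a)
    nlinarith [this]
  have e3 : 6*σ^2*c^2*a^2 ≤ 6*σ^2*c^2*(((t+2)*(1+q^2))*((y+m)*a)) := by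
    have h4 : a*a ≤ ((t+2)*(1+q^2)*(y+m))*a := mul_le_mul_of_nonneg_right h_a_P ha.le
    have := mul_le_mul_of_nonneg_left h4 (by positivity : (0:ℝ) ≤ 6*σ^2*c^2)
    nlinarith [this]
  have e4 : 6*σ^2*q^2*a^2 ≤ 6*σ^2*c^2*(((t+2)*(1+q^2))*((y+m)*a)) := by
    have h5 : q^2*a ≤ c^2*((t+2)*(1+q^2)*(y+m)) := by
      have hc2 : q^2 ≤ c^2*(1+q^2) := by
        have hc2' : (1:ℝ) ≤ c^2 := by nlinarith
        have := mul_le_mul_of_nonneg_right hc2' (by positivity : (0:ℝ) ≤ 1+q^2)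
        nlinarith [this]
      have hP2 : a ≤ (t+2)*(1+q^2)*(y+m) := h_a_P
      calc q^2*a ≤ (c^2*(1+q^2))*a := mul_le_mul_of_nonneg_right hc2 ha.le
        _ ≤ (c^2*(1+q^2))*((t+2)*(y+m)) := by
            have h7 : a ≤ (t+2)*(y+m) := by nlinarith [mul_le_mul_of_nonneg_left (by linarith : y ≤ y+m) (by linarith : (0:ℝ) ≤ t+2)]
            exact mul_le_mul_of_nonneg_left h7 (by positivity)
        _ = c^2*((t+2)*(1+q^2)*(y+m)) := by ring
    have := mul_le_mul_of_nonneg_left h5 (by positivity : (0:ℝ) ≤ 6*σ^2*a)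
    nlinarith [this]
  have k1 : N^2 * a^2 ≤ (2 + 2*σ^2*U^2) * a^2 := mul_le_mul_of_nonneg_right hN2 (sq_nonneg a)
  have k2 : 2*σ^2*U^2*a^2 ≤ 2*σ^2*(3*(A^2 + c^2 + q^2))*a^2 := by
    have := mul_le_mul_of_nonneg_left hU2 (by positivity : (0:ℝ) ≤ 2*σ^2*a^2)
    nlinarith [this]
  rw [hA2] at k2
  nlinarith [k1, k2, e1, e2, e3, e4]

lemma wt_bound (s : ℂ) (hs : 0 < s.im) (lam : ℂ) (hlam : 0 ≤ lam.im) :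
    ∃ K : ℝ, 0 ≤ K ∧ ∀ z : ℂ, 0 < z.im → ∀ q : ℝ,
      wt s (-1/(z + lam - (q:ℂ) + 1)) ≤ K * ((wt s z + 2) * (1 + q^2)) := by
  set c : ℝ := ‖s‖ + ‖lam‖ + 1 with hc
  set B : ℝ := 2 + 6*(‖s‖)^2*(s.im)^2 + 12*(‖s‖)^2*c^2 with hB
  have hc1 : 1 ≤ c := by
    have := norm_nonneg s
    have := norm_nonneg lam
    simp only [hc]; linarith
  have hB0 : 0 ≤ B := by positivity
  refine ⟨B / (s.im)^2, by positivity, ?_⟩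
  intro z hz q
  set u : ℂ := z + lam - (q:ℂ) + 1 with hu
  have him_u : u.im = z.im + lam.im := by simp [hu]
  have hupos : 0 < u.im := by rw [him_u]; linarith
  have ht0 : 0 ≤ wt s z := by unfold wt; positivity
  have hts : ‖z - s‖ ^ 2 = wt s z * (z.im * s.im) := by
    unfold wt; field_simp
  have habzs : (z.im - s.im)^2 ≤ ‖z - s‖ ^ 2 := by
    rw [Complex.sq_norm, Complex.normSq_apply, Complex.sub_im]
    nlinarith [sq_nonneg (z.re - s.re)]
  have habs_u : ‖u‖ ≤ ‖z - s‖ + (c + |q|) := by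
    have e : u = (z - s) + (s + lam + (1 - (q:ℂ))) := by rw [hu]; ring
    have t1 : ‖u‖ ≤ ‖z-s‖ + ‖s + lam + (1 - (q:ℂ))‖ := by
      rw [e]; exact norm_add_le _ _
    have t2 : ‖s + lam + (1 - (q:ℂ))‖ ≤
        ‖s‖ + ‖lam‖ + ‖1 - (q:ℂ)‖ := by
      have := norm_add_le (s + lam) (1 - (q:ℂ))
      have := norm_add_le s lam
      linarith
    have t3 : ‖1 - (q:ℂ)‖ ≤ 1 + |q| := by
      calc ‖1 - (q:ℂ)‖ = ‖1 + (-(q:ℂ))‖ := by ring_nf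
        _ ≤ ‖1‖ + ‖-(q:ℂ)‖ := norm_add_le _ _
        _ = 1 + |q| := by simp
    simp only [hc]; linarith
  have hNb : ‖1 + s*u‖ ≤ 1 + ‖s‖ * ‖u‖ := by
    calc ‖1 + s*u‖ ≤ ‖1‖ + ‖s*u‖ := norm_add_le _ _
      _ = 1 + ‖s‖ * ‖u‖ := by simp [map_mul]
  have key := real_key s.im z.im lam.im (wt s z) q c (‖s‖)
    (‖1 + s*u‖) (‖u‖) (‖z - s‖)
    hs hz hlam ht0 hc1 (norm_nonneg s) (norm_nonneg _) (norm_nonneg u)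
    (norm_nonneg _) hts habzs habs_u hNb
  rw [wt_invert s hs u hupos, him_u]
  rw [div_mul_eq_mul_div, div_le_div_iff₀ (by positivity) (by positivity : (0:ℝ) < (s.im)^2)]
  calc ‖1 + s*u‖ ^ 2 * (s.im)^2
      ≤ B * (((wt s z+2)*(1+q^2))*((z.im+lam.im)*s.im)) := key
    _ = B * ((wt s z+2)*(1+q^2)) * ((z.im+lam.im)*s.im) := by ring

lemma add_rpow_le (r x y : ℝ) (hr : 0 ≤ r) (hx : 0 ≤ x) (hy : 0 ≤ y) :
    (x + y) ^ r ≤ 2 ^ r * (x ^ r + y ^ r) := by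
  have h2 : (0:ℝ) ≤ 2 ^ r := Real.rpow_nonneg (by norm_num) r
  rcases le_total x y with h | h
  · calc (x+y)^r ≤ (2*y)^r := Real.rpow_le_rpow (by linarith) (by linarith) hr
      _ = 2^r * y^r := Real.mul_rpow (by norm_num) hy
      _ ≤ 2^r * (x^r + y^r) := by
          have := Real.rpow_nonneg hx r
          nlinarith
  · calc (x+y)^r ≤ (2*x)^r := Real.rpow_le_rpow (by linarith) (by linarith) hr
      _ = 2^r * x^r := Real.mul_rpow (by norm_num) hx
      _ ≤ 2^r * (x^r + y^r) := by
          have := Real.rpow_nonneg hy r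
          nlinarith

lemma wt_rpow_bound (s : ℂ) (hs : 0 < s.im) (lam : ℂ) (hlam : 0 ≤ lam.im)
    (p : ℝ) (hp : 0 < p) (hp1 : p < 1) :
    ∃ C : ℝ, 0 ≤ C ∧ ∀ z : ℂ, 0 < z.im → ∀ q : ℝ,
      wt s (-1/(z + lam - (q:ℂ) + 1)) ^ (1+p) ≤
        C * ((wt s z ^ (1+p) + 1) * (|q| ^ (2*(1+p)) + 1)) := by
  obtain ⟨K, hK, hKb⟩ := wt_bound s hs lam hlam
  set r : ℝ := 1 + p with hrdef
  have hr0 : 0 ≤ r := by simp only [hrdef]; linarith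
  have hr2 : r ≤ 2 := by simp only [hrdef]; linarith
  have h2r : (2:ℝ) ^ r ≤ 4 := by
    calc (2:ℝ) ^ r ≤ 2 ^ (2:ℝ) := Real.rpow_le_rpow_of_exponent_le one_le_two hr2
      _ = 4 := by
        rw [show (2:ℝ) = ((2:ℕ):ℝ) from by norm_num, Real.rpow_natCast]
        norm_num
  refine ⟨K ^ r * 64, by positivity, ?_⟩
  intro z hz q
  set t : ℝ := wt s z with ht
  have ht0 : 0 ≤ t := by rw [ht]; unfold wt; positivity
  have hq2 : (0:ℝ) ≤ 1 + q^2 := by positivity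
  have hw0 : 0 ≤ wt s (-1/(z + lam - (q:ℂ) + 1)) := by
    have hupos : (0:ℝ) < (z + lam - (q:ℂ) + 1).im := by
      have : (z + lam - (q:ℂ) + 1).im = z.im + lam.im := by simp
      rw [this]; linarith
    rw [wt_invert s hs _ hupos]
    positivity
  have step1 : wt s (-1/(z + lam - (q:ℂ) + 1)) ^ r ≤ (K * ((t+2)*(1+q^2))) ^ r :=
    Real.rpow_le_rpow hw0 (hKb z hz q) hr0
  have step2 : (K * ((t+2)*(1+q^2))) ^ r = K^r * ((t+2)^r * (1+q^2)^r) := by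
    rw [Real.mul_rpow hK (by positivity), Real.mul_rpow (by linarith) hq2]
  have hA : (t+2)^r ≤ 16 * (t^r + 1) := by
    have h1 : (t+2)^r ≤ 2^r * (t^r + 2^r) := add_rpow_le r t 2 hr0 ht0 (by norm_num)
    have h2 : 0 ≤ t^r := Real.rpow_nonneg ht0 r
    have h3 : (0:ℝ) ≤ 2^r := Real.rpow_nonneg (by norm_num) r
    nlinarith [mul_le_mul h2r (le_refl (t^r + 2^r)) (by linarith) (by norm_num : (0:ℝ) ≤ 4)]
  have hq2r : (q^2)^r = |q| ^ (2*r) := by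
    rw [← sq_abs q, ← Real.rpow_natCast |q| 2, ← Real.rpow_mul (abs_nonneg q)]
    norm_num
  have hB : (1+q^2)^r ≤ 4 * (|q| ^ (2*r) + 1) := by
    have h1 : (1+q^2)^r ≤ 2^r * (1^r + (q^2)^r) := add_rpow_le r 1 (q^2) hr0 (by norm_num) (sq_nonneg q)
    rw [Real.one_rpow, hq2r] at h1
    have h2 : 0 ≤ |q| ^ (2*r) := Real.rpow_nonneg (abs_nonneg q) _
    nlinarith [Real.rpow_nonneg (by norm_num : (0:ℝ) ≤ 2) r]
  calc wt s (-1/(z + lam - (q:ℂ) + 1)) ^ r ≤ K^r * ((t+2)^r * (1+q^2)^r) := by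
        rw [← step2]; exact step1
    _ ≤ K^r * ((16*(t^r+1)) * (4*(|q| ^ (2*r) + 1))) := by
        apply mul_le_mul_of_nonneg_left _ (Real.rpow_nonneg hK r)
        apply mul_le_mul hA hB (by positivity) (by positivity)
    _ = K^r * 64 * ((t^r + 1) * (|q| ^ (2*r) + 1)) := by ring


/-- **single-step propagation of weight moments.** Let `s ∈ ℍ`,
`Im λ ≥ 0`, `p ∈ (0,1)`, `ν` a Borel probability measure on `ℝ` with finite
`2(1+p)`-moment, and `ρ` a Borel probability measure on `ℍ` with
`∫ w_s(z)^{1+p} dρ(z) < ∞`.  Then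
`∫∫ w_s(−1/(z+λ−q+1))^{1+p} dρ(z) dν(q) < ∞`. -/
theorem statement6 (s : ℂ) (hs : 0 < s.im) (lam : ℂ) (hlam : 0 ≤ lam.im)
    (p : ℝ) (hp : 0 < p) (hp1 : p < 1)
    (ν : Measure ℝ) [IsProbabilityMeasure ν]
    (hmom : ∫⁻ q : ℝ, ENNReal.ofReal (|q| ^ (2 * (1 + p))) ∂ν < ⊤)
    (ρ : Measure ℂ) [IsProbabilityMeasure ρ] (hρsupp : ρ {z : ℂ | z.im ≤ 0} = 0)
    (hρmom : ∫⁻ z, ENNReal.ofReal (wt s z ^ (1 + p)) ∂ρ < ⊤) :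
    ∫⁻ z, ∫⁻ q : ℝ,
        ENNReal.ofReal (wt s (-1 / (z + lam - (q : ℂ) + 1)) ^ (1 + p)) ∂ν ∂ρ < ⊤ := by
  obtain ⟨C, hC, hCb⟩ := wt_rpow_bound s hs lam hlam p hp hp1
  set G : ℝ≥0∞ := ENNReal.ofReal C with hG
  have hGtop : G ≠ ⊤ := ENNReal.ofReal_ne_top
  set M : ℝ≥0∞ := ∫⁻ q : ℝ, ENNReal.ofReal (|q| ^ (2 * (1 + p))) ∂ν with hM
  have hMtop : M ≠ ⊤ := hmom.ne
  have hae : ∀ᵐ z ∂ρ, 0 < z.im := by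
    rw [ae_iff]
    convert hρsupp using 2
    ext z; simp [not_lt]
  have hinner : ∀ z : ℂ, 0 < z.im →
      (∫⁻ q : ℝ, ENNReal.ofReal (wt s (-1 / (z + lam - (q : ℂ) + 1)) ^ (1 + p)) ∂ν)
        ≤ (G * (M + 1)) * (ENNReal.ofReal (wt s z ^ (1 + p)) + 1) := by
    intro z hz
    set F : ℝ≥0∞ := ENNReal.ofReal (wt s z ^ (1 + p)) + 1 with hF
    have hFtop : F ≠ ⊤ := by
      simp [hF]
    have hptw : ∀ q : ℝ, ENNReal.ofReal (wt s (-1 / (z + lam - (q : ℂ) + 1)) ^ (1 + p))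
        ≤ (G * F) * (ENNReal.ofReal (|q| ^ (2 * (1 + p))) + 1) := by
      intro q
      have h1 := hCb z hz q
      have hwtz : 0 ≤ wt s z ^ (1+p) := by
        unfold wt; positivity
      have hq : 0 ≤ |q| ^ (2*(1+p)) := Real.rpow_nonneg (abs_nonneg q) _
      calc ENNReal.ofReal (wt s (-1 / (z + lam - (q : ℂ) + 1)) ^ (1 + p))
          ≤ ENNReal.ofReal (C * ((wt s z ^ (1+p) + 1) * (|q| ^ (2*(1+p)) + 1))) :=
            ENNReal.ofReal_le_ofReal h1
        _ = G * ((ENNReal.ofReal (wt s z ^ (1+p)) + 1) * (ENNReal.ofReal (|q| ^ (2*(1+p))) + 1)) := by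
            rw [ENNReal.ofReal_mul hC, ENNReal.ofReal_mul (by linarith),
              ENNReal.ofReal_add hwtz zero_le_one, ENNReal.ofReal_add hq zero_le_one,
              ENNReal.ofReal_one]
        _ = (G * F) * (ENNReal.ofReal (|q| ^ (2*(1+p))) + 1) := by
            rw [hF]; ring
    calc (∫⁻ q : ℝ, ENNReal.ofReal (wt s (-1 / (z + lam - (q : ℂ) + 1)) ^ (1 + p)) ∂ν)
        ≤ ∫⁻ q : ℝ, (G * F) * (ENNReal.ofReal (|q| ^ (2 * (1 + p))) + 1) ∂ν :=
          lintegral_mono hptw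
      _ = (G * F) * ∫⁻ q : ℝ, (ENNReal.ofReal (|q| ^ (2 * (1 + p))) + 1) ∂ν :=
          lintegral_const_mul' _ _ (ENNReal.mul_ne_top hGtop hFtop)
      _ = (G * F) * (M + 1) := by
          rw [lintegral_add_right _ measurable_const, lintegral_const, measure_univ, mul_one, ← hM]
      _ = (G * (M + 1)) * F := by ring
  have houter : ∫⁻ z, ∫⁻ q : ℝ,
        ENNReal.ofReal (wt s (-1 / (z + lam - (q : ℂ) + 1)) ^ (1 + p)) ∂ν ∂ρ
      ≤ ∫⁻ z, (G * (M + 1)) * (ENNReal.ofReal (wt s z ^ (1 + p)) + 1) ∂ρ := by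
    apply lintegral_mono_ae
    filter_upwards [hae] with z hz
    exact hinner z hz
  have hfin : ∫⁻ z, (G * (M + 1)) * (ENNReal.ofReal (wt s z ^ (1 + p)) + 1) ∂ρ < ⊤ := by
    rw [lintegral_const_mul' _ _ (ENNReal.mul_ne_top hGtop (by simp [hMtop]))]
    rw [lintegral_add_right _ measurable_const, lintegral_const, measure_univ, mul_one]
    exact (ENNReal.mul_ne_top (ENNReal.mul_ne_top hGtop
      (ENNReal.add_ne_top.mpr ⟨hMtop, ENNReal.one_ne_top⟩))
      (ENNReal.add_ne_top.mpr ⟨hρmom.ne, ENNReal.one_ne_top⟩)).lt_top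
  exact lt_of_le_of_lt houter hfin

end
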